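/- For a plane curve parametrized as (x, x^γ) with p1 = -y'''/(3y''), p2 = p3 = 0, the projective curvature κ = Θ8³/Θ3⁸ equals 3⁹ (1 + γ² − γ)³ / ((γ−2)²(2γ−1)²(γ+1)²) for γ ∉ {0, 1, −1, 2, 1/2}. -/

import Mathlib

noncomputable def pw (c r : ℝ) : ℝ → ℝ := fun t => c * t ^ r

lemma pw_hasDerivAt (c r : ℝ) {x : ℝ} (hx : x ≠ 0) :
    HasDerivAt (pw c r) (c * r * x ^ (r - 1)) x := by
  have := (Real.hasDerivAt_rpow_const (p := r) (Or.inl hx)).const_mul c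
  have h2 : HasDerivAt (fun y : ℝ => c * y ^ r) (c * (r * x ^ (r - 1))) x := this
  rw [mul_assoc]
  exact h2

lemma deriv_congr_Ioi {f g : ℝ → ℝ} (h : Set.EqOn f g (Set.Ioi 0)) {x : ℝ} (hx : 0 < x) :
    deriv f x = deriv g x :=
  Filter.EventuallyEq.deriv_eq (Filter.eventuallyEq_of_mem (isOpen_Ioi.mem_nhds hx) h)

lemma deriv_of_eqOn_pw {f : ℝ → ℝ} {c r : ℝ} (h : Set.EqOn f (pw c r) (Set.Ioi 0)) :
    Set.EqOn (deriv f) (pw (c * r) (r - 1)) (Set.Ioi 0) := by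
  intro x hx
  rw [deriv_congr_Ioi h hx, (pw_hasDerivAt c r (ne_of_gt hx)).deriv]
  rfl

lemma iteratedDeriv2_of_eqOn_pw {f : ℝ → ℝ} {c r : ℝ}
    (h : Set.EqOn f (pw c r) (Set.Ioi 0)) :
    Set.EqOn (iteratedDeriv 2 f) (pw (c * r * (r - 1)) (r - 1 - 1)) (Set.Ioi 0) := by
  intro x hx
  rw [iteratedDeriv_succ, iteratedDeriv_one]
  exact deriv_of_eqOn_pw (deriv_of_eqOn_pw h) hx

lemma iteratedDeriv3_of_eqOn_pw {f : ℝ → ℝ} {c r : ℝ}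
    (h : Set.EqOn f (pw c r) (Set.Ioi 0)) :
    Set.EqOn (iteratedDeriv 3 f) (pw (c * r * (r - 1) * (r - 1 - 1)) (r - 1 - 1 - 1))
      (Set.Ioi 0) := by
  intro x hx
  rw [iteratedDeriv_succ]
  exact deriv_of_eqOn_pw (iteratedDeriv2_of_eqOn_pw h) hx

lemma xpow_negn {x : ℝ} (hx : 0 < x) (n : ℕ) : x ^ (-(n : ℝ)) = (x ^ (-1 : ℝ)) ^ n := by
  rw [← Real.rpow_natCast (x ^ (-1 : ℝ)) n, ← Real.rpow_mul hx.le]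
  norm_num



/-- Wilczynski coefficient `p₁ = −y'''/(3y'')` for a curve `y = y(x)` (with `p₂ = p₃ = 0`). -/
noncomputable def p1f (y : ℝ → ℝ) : ℝ → ℝ :=
  fun x => -(iteratedDeriv 3 y x) / (3 * iteratedDeriv 2 y x)

/-- Semi-invariant `P₂ = −p₁² − p₁'`. -/
noncomputable def P2f (y : ℝ → ℝ) : ℝ → ℝ :=
  fun x => -(p1f y x) ^ 2 - deriv (p1f y) x

/-- Semi-invariant `P₃ = 2p₁³ − p₁''`. -/
noncomputable def P3f (y : ℝ → ℝ) : ℝ → ℝ :=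
  fun x => 2 * (p1f y x) ^ 3 - iteratedDeriv 2 (p1f y) x

/-- Relative invariant `Θ₃ = P₃ − (3/2)P₂'`. -/
noncomputable def Theta3f (y : ℝ → ℝ) : ℝ → ℝ :=
  fun x => P3f y x - (3 / 2) * deriv (P2f y) x

/-- Relative invariant `Θ₈ = 6Θ₃Θ₃'' − 7(Θ₃')² − 27P₂Θ₃²`. -/
noncomputable def Theta8f (y : ℝ → ℝ) : ℝ → ℝ :=
  fun x => 6 * Theta3f y x * iteratedDeriv 2 (Theta3f y) x
    - 7 * (deriv (Theta3f y) x) ^ 2 - 27 * P2f y x * (Theta3f y x) ^ 2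


section chain

variable (γ : ℝ)

lemma p1f_eqOn (h0 : γ ≠ 0) (h1 : γ ≠ 1) :
    Set.EqOn (p1f (pw 1 γ)) (pw ((2 - γ) / 3) (-1)) (Set.Ioi 0) := by
  intro x hx
  have hx' : (0 : ℝ) < x := hx
  have h2' := iteratedDeriv2_of_eqOn_pw ((fun _ _ => rfl : Set.EqOn (pw 1 γ) (pw 1 γ) (Set.Ioi 0))) hx
  have h3' := iteratedDeriv3_of_eqOn_pw ((fun _ _ => rfl : Set.EqOn (pw 1 γ) (pw 1 γ) (Set.Ioi 0))) hx
  have hp : (0 : ℝ) < x ^ (γ - 1 - 1) := Real.rpow_pos_of_pos hx' _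
  have hsplit : x ^ (γ - 1 - 1 - 1) = x ^ (γ - 1 - 1) * x ^ (-1 : ℝ) := by
    rw [← Real.rpow_add hx']; ring_nf
  have hg1 : γ - 1 ≠ 0 := sub_ne_zero.mpr h1
  simp only [p1f, h2', h3', pw, hsplit]
  field_simp
  ring


lemma P2f_eqOn {y : ℝ → ℝ} {a : ℝ} (hp1 : Set.EqOn (p1f y) (pw a (-1)) (Set.Ioi 0)) :
    Set.EqOn (P2f y) (pw (a - a ^ 2) (-2)) (Set.Ioi 0) := by
  intro x hx
  have hx' : (0 : ℝ) < x := hx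
  have hd := deriv_of_eqOn_pw hp1 hx
  simp only [P2f, hp1 hx, hd, pw]
  rw [show (-1 - 1 : ℝ) = -((2 : ℕ) : ℝ) by norm_num, xpow_negn hx',
      show (-2 : ℝ) = -((2 : ℕ) : ℝ) by norm_num, xpow_negn hx']
  ring

lemma P3f_eqOn {y : ℝ → ℝ} {a : ℝ} (hp1 : Set.EqOn (p1f y) (pw a (-1)) (Set.Ioi 0)) :
    Set.EqOn (P3f y) (pw (2 * a ^ 3 - 2 * a) (-3)) (Set.Ioi 0) := by
  intro x hx
  have hx' : (0 : ℝ) < x := hx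
  have hd := iteratedDeriv2_of_eqOn_pw hp1 hx
  simp only [P3f, hp1 hx, hd, pw]
  rw [show (-1 - 1 - 1 : ℝ) = -((3 : ℕ) : ℝ) by norm_num, xpow_negn hx',
      show (-3 : ℝ) = -((3 : ℕ) : ℝ) by norm_num, xpow_negn hx']
  ring

lemma Theta3f_eqOn {y : ℝ → ℝ} {a : ℝ} (hp1 : Set.EqOn (p1f y) (pw a (-1)) (Set.Ioi 0)) :
    Set.EqOn (Theta3f y) (pw (2 * a ^ 3 - 3 * a ^ 2 + a) (-3)) (Set.Ioi 0) := by
  intro x hx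
  have hx' : (0 : ℝ) < x := hx
  have hd := deriv_of_eqOn_pw (P2f_eqOn hp1) hx
  simp only [Theta3f, P3f_eqOn hp1 hx, hd, pw]
  rw [show (-2 - 1 : ℝ) = -((3 : ℕ) : ℝ) by norm_num, xpow_negn hx',
      show (-3 : ℝ) = -((3 : ℕ) : ℝ) by norm_num, xpow_negn hx']
  ring

lemma Theta8f_eqOn {y : ℝ → ℝ} {a : ℝ} (hp1 : Set.EqOn (p1f y) (pw a (-1)) (Set.Ioi 0)) :
    Set.EqOn (Theta8f y)
      (pw ((2 * a ^ 3 - 3 * a ^ 2 + a) ^ 2 * (9 - 27 * a + 27 * a ^ 2)) (-8))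
      (Set.Ioi 0) := by
  intro x hx
  have hx' : (0 : ℝ) < x := hx
  have hT3 := Theta3f_eqOn hp1
  have hd := deriv_of_eqOn_pw hT3 hx
  have hdd := iteratedDeriv2_of_eqOn_pw hT3 hx
  simp only [Theta8f, hT3 hx, hd, hdd, P2f_eqOn hp1 hx, pw]
  rw [show (-3 - 1 - 1 : ℝ) = -((5 : ℕ) : ℝ) by norm_num, xpow_negn hx',
      show (-3 - 1 : ℝ) = -((4 : ℕ) : ℝ) by norm_num, xpow_negn hx',
      show (-2 : ℝ) = -((2 : ℕ) : ℝ) by norm_num, xpow_negn hx',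
      show (-3 : ℝ) = -((3 : ℕ) : ℝ) by norm_num, xpow_negn hx',
      show (-8 : ℝ) = -((8 : ℕ) : ℝ) by norm_num, xpow_negn hx']
  ring

theorem projective_curvature_power_curve (γ : ℝ)
    (h0 : γ ≠ 0) (h1 : γ ≠ 1) (hm1 : γ ≠ -1) (h2 : γ ≠ 2) (hh : γ ≠ 1 / 2)
    (x : ℝ) (hx : 0 < x) :
    (Theta8f (fun x : ℝ => x ^ γ) x) ^ 3 / (Theta3f (fun x : ℝ => x ^ γ) x) ^ 8 =
      3 ^ 9 * (1 + γ ^ 2 - γ) ^ 3 /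
        ((γ - 2) ^ 2 * (2 * γ - 1) ^ 2 * (γ + 1) ^ 2) := by
  have hy : (fun x : ℝ => x ^ γ) = pw 1 γ := funext fun t => (one_mul _).symm
  have hp1 := p1f_eqOn γ h0 h1
  have hxI : x ∈ Set.Ioi (0 : ℝ) := hx
  rw [hy, Theta8f_eqOn hp1 hxI, Theta3f_eqOn hp1 hxI]
  set a : ℝ := (2 - γ) / 3 with ha
  set u : ℝ := x ^ (-1 : ℝ) with hu
  have hu0 : u ≠ 0 := (Real.rpow_pos_of_pos hx _).ne'
  have hbγ : 2 * a ^ 3 - 3 * a ^ 2 + a = -((γ - 2) * (2 * γ - 1) * (γ + 1)) / 27 := by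
    rw [ha]; ring
  have hkγ : 9 - 27 * a + 27 * a ^ 2 = 3 * (1 + γ ^ 2 - γ) := by
    rw [ha]; ring
  have hd2 : γ - 2 ≠ 0 := sub_ne_zero.mpr h2
  have hd1 : 2 * γ - 1 ≠ 0 := by
    intro h; apply hh; linarith [sub_eq_zero.mp h]
  have hdm : γ + 1 ≠ 0 := by
    intro h; apply hm1; linarith
  have hb0 : 2 * a ^ 3 - 3 * a ^ 2 + a ≠ 0 := by
    rw [hbγ]
    simp only [ne_eq, div_eq_zero_iff, neg_eq_zero]
    push_neg
    refine ⟨mul_ne_zero (mul_ne_zero hd2 hd1) hdm, by norm_num⟩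
  simp only [pw]
  rw [show (-8 : ℝ) = -((8 : ℕ) : ℝ) by norm_num, xpow_negn hx,
      show (-3 : ℝ) = -((3 : ℕ) : ℝ) by norm_num, xpow_negn hx, ← hu]
  rw [hbγ, hkγ]
  field_simp
  ring
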